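/- In the setting of the mean-field Ising model with the equi-energy Metropolis chain, the projected birth-and-death chain \bar P on {0,2,...,N} (with \bar P(0,2) = p₁/2, \bar P(i,i+2) = (p₁/4)(N−i)/N, \bar P(i,i−2) = (p₁/4)((N+i)/N)exp(2β(1−i)/N)) satisfies λ₁(\bar P) ≤ 1 − (p₁/16)·(N/2+1)^{−3} and λ_{N/2}(\bar P) ≥ 1 − p₁, for all β > 0 and N sufficiently large. -/

import Mathlib

open Finset

/-- Upward transition probability of the projected chain at state `k`
(state `k` encodes energy level `i = 2k`): `\bar P(0,2) = p₁/2`,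
`\bar P(i,i+2) = (p₁/4)(N-i)/N`. -/
noncomputable def barUp (N : ℕ) (p₁ : ℝ) (k : ℕ) : ℝ :=
  if k = 0 then p₁ / 2 else p₁ / 4 * (((N : ℝ) - 2 * k) / N)

/-- Downward transition probability: `\bar P(i,i-2) = (p₁/4)((N+i)/N) exp(2β(1-i)/N)`. -/
noncomputable def barDown (N : ℕ) (β p₁ : ℝ) (k : ℕ) : ℝ :=
  p₁ / 4 * (((N : ℝ) + 2 * k) / N) * Real.exp (2 * β * (1 - 2 * (k : ℝ)) / N)

/-- The projected birth-and-death chain `\bar P` on `{0,1,…,N/2}`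
(state `k` encodes level `2k`), with the diagonal making rows sum to one. -/
noncomputable def barQ (N : ℕ) (β p₁ : ℝ) (k j : ℕ) : ℝ :=
  if j = k + 1 ∧ j ≤ N / 2 then barUp N p₁ k
  else if j + 1 = k ∧ k ≤ N / 2 then barDown N β p₁ k
  else if j = k ∧ k ≤ N / 2 then
    1 - (if k + 1 ≤ N / 2 then barUp N p₁ k else 0)
      - (if k ≠ 0 then barDown N β p₁ k else 0)
  else 0

/-- `\bar π(i) ∝ q_N(i)(2 - 1{i=0})` with `q_N(i) = C(N,(N-i)/2) exp(βi²/(2N))`;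
here expressed at state `k` (level `2k`). -/
noncomputable def barPiW (N : ℕ) (β : ℝ) (k : ℕ) : ℝ :=
  (if k = 0 then (1 : ℝ) else 2) *
    (N.choose ((N - 2 * k) / 2) : ℝ) * Real.exp (β * (2 * (k : ℝ)) ^ 2 / (2 * N))


/-- log-ratio function for the stationary weights. -/
noncomputable def sfun (β : ℝ) (n k : ℕ) : ℝ :=
  Real.log ((n : ℝ) - k) + β * (2 * k + 1) / n - Real.log ((n : ℝ) + k + 1)

lemma e_step (β : ℝ) (n x : ℕ) (hx : x + 3 ≤ n) :
    sfun β n (x + 2) - sfun β n (x + 1) ≤ sfun β n (x + 1) - sfun β n x := by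
  have h1 : (0:ℝ) < (n:ℝ) - (x+2) := by
    have : (x:ℝ) + 3 ≤ n := by exact_mod_cast hx
    linarith
  have h2 : (0:ℝ) < (n:ℝ) - (x+1) := by linarith
  have h3 : (0:ℝ) < (n:ℝ) - x := by linarith
  have h4 : (0:ℝ) < (n:ℝ) + x + 1 := by positivity
  have h5 : (0:ℝ) < (n:ℝ) + x + 2 := by linarith
  have h6 : (0:ℝ) < (n:ℝ) + x + 3 := by linarith
  have key : ((n:ℝ) - (x+2)) * ((n:ℝ) - x) * (((n:ℝ) + x + 2) * ((n:ℝ) + x + 2))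
      ≤ (((n:ℝ) - (x+1)) * ((n:ℝ) - (x+1))) * (((n:ℝ) + x + 1) * ((n:ℝ) + x + 3)) := by
    nlinarith [h1, h2, h3, h4, h5, h6, sq_nonneg ((n:ℝ) - (x+1)), sq_nonneg ((n:ℝ) + x + 2)]
  have hlog := Real.log_le_log (by positivity) key
  rw [Real.log_mul (by positivity) (by positivity), Real.log_mul (by positivity) (by positivity),
      Real.log_mul (by positivity) (by positivity), Real.log_mul (by positivity) (by positivity)]
      at hlog
  rw [Real.log_mul (by positivity) (by positivity), Real.log_mul (by positivity) (by positivity)] at hlog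
  unfold sfun
  have harg1 : ((n:ℝ) - (x+2:ℕ)) = (n:ℝ) - (x+2) := by push_cast; ring
  have harg2 : ((n:ℝ) - (x+1:ℕ)) = (n:ℝ) - (x+1) := by push_cast; ring
  have harg3 : ((n:ℝ) + (x+2:ℕ) + 1) = (n:ℝ) + x + 3 := by push_cast; ring
  have harg4 : ((n:ℝ) + (x+1:ℕ) + 1) = (n:ℝ) + x + 2 := by push_cast; ring
  rw [harg1, harg2, harg3, harg4]
  push_cast
  have hβ : β * (2*((x:ℝ)+2)+1)/n - β*(2*((x:ℝ)+1)+1)/n = β*(2*((x:ℝ)+1)+1)/n - β*(2*(x:ℝ)+1)/n := by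
    ring
  linarith [hlog, hβ]


lemma e_anti (β : ℝ) (n x' x : ℕ) (h : x' ≤ x) (hx : x + 2 ≤ n) :
    sfun β n (x + 1) - sfun β n x ≤ sfun β n (x' + 1) - sfun β n x' := by
  induction x, h using Nat.le_induction with
  | base => exact le_refl _
  | succ m hm ih =>
    exact le_trans (e_step β n m (by omega)) (ih (by omega))

lemma single_cross (β : ℝ) (n j : ℕ) (hj1 : 1 ≤ j) (hjn : j + 1 ≤ n)
    (hs : sfun β n j < 0) (hx : ∃ x < j, sfun β n (x + 1) - sfun β n x < 0) :
    ∀ k, j ≤ k → k + 1 ≤ n → sfun β n k ≤ 0 := by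
  obtain ⟨x, hxj, hxneg⟩ := hx
  intro k hk hkn
  have main : ∀ k, j ≤ k → k + 1 ≤ n → sfun β n k ≤ sfun β n j := by
    intro k hk
    induction k, hk using Nat.le_induction with
    | base => intro; exact le_refl _
    | succ m hm ih =>
      intro hmn
      have he : sfun β n (m + 1) - sfun β n m ≤ sfun β n (x + 1) - sfun β n x :=
        e_anti β n x m (by omega) (by omega)
      have := ih (by omega)
      linarith
  linarith [main k hk hkn]

lemma s0_nonneg (β : ℝ) (n : ℕ) (hβ : 1 ≤ β) (hn : 1 ≤ n) : 0 ≤ sfun β n 0 := by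
  unfold sfun
  have hn' : (1:ℝ) ≤ (n:ℝ) := by exact_mod_cast hn
  have hpos : (0:ℝ) < n := by linarith
  have hlog : Real.log ((n:ℝ) + 0 + 1) - Real.log ((n:ℝ) - 0) = Real.log (((n:ℝ)+1)/n) := by
    rw [Real.log_div (by linarith) (by linarith)]; ring_nf
  have hle : Real.log (((n:ℝ)+1)/n) ≤ ((n:ℝ)+1)/n - 1 :=
    Real.log_le_sub_one_of_pos (by positivity)
  have h2 : ((n:ℝ)+1)/n - 1 = 1/n := by field_simp; ring
  have h3 : β * (2 * (0:ℕ) + 1) / n = β / n := by norm_num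
  have : Real.log ((n:ℝ) + 0 + 1) - Real.log ((n:ℝ) - 0) ≤ 1/n := by
    rw [hlog]; linarith
  have hβn : 1/(n:ℝ) ≤ β/n := by gcongr
  linarith

lemma e0_neg (β : ℝ) (n : ℕ) (hβ0 : 0 < β) (hβ : β < 1) (hn : 2 ≤ n)
    (hngood : 2 * β ≤ (1 - β) * n) : sfun β n 1 - sfun β n 0 < 0 := by
  unfold sfun
  have hn' : (2:ℝ) ≤ (n:ℝ) := by exact_mod_cast hn
  have h1 : (0:ℝ) < (n:ℝ) - 1 := by linarith
  have h0 : (0:ℝ) < (n:ℝ) := by linarith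
  -- need: 2β/n < log(n(n+2)) - log((n-1)(n+1))
  have key : Real.log (((n:ℝ)-1) * ((n:ℝ)+1)) < Real.log ((n:ℝ) * ((n:ℝ)+2)) - 2*β/n := by
    have hlb : 1 - (((n:ℝ)-1) * ((n:ℝ)+1)) / ((n:ℝ) * ((n:ℝ)+2))
        ≤ Real.log ((n:ℝ) * ((n:ℝ)+2)) - Real.log (((n:ℝ)-1) * ((n:ℝ)+1)) := by
      have h := Real.log_le_sub_one_of_pos (x := (((n:ℝ)-1) * ((n:ℝ)+1)) / ((n:ℝ) * ((n:ℝ)+2)))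
        (by positivity)
      rw [Real.log_div (by positivity) (by positivity)] at h
      linarith
    have hval : 1 - (((n:ℝ)-1) * ((n:ℝ)+1)) / ((n:ℝ) * ((n:ℝ)+2)) = (2*(n:ℝ)+1)/((n:ℝ)*((n:ℝ)+2)) := by
      field_simp; ring
    have hnum : 2*β/n < (2*(n:ℝ)+1)/((n:ℝ)*((n:ℝ)+2)) := by
      rw [div_lt_div_iff₀ h0 (by positivity)]
      nlinarith [hngood, hβ0, hn']
    linarith
  have e1 : Real.log (((n:ℝ)-1) * ((n:ℝ)+1)) = Real.log ((n:ℝ) - 1) + Real.log ((n:ℝ)+1) := by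
    rw [Real.log_mul (by positivity) (by positivity)]
  have e2 : Real.log ((n:ℝ) * ((n:ℝ)+2)) = Real.log ((n:ℝ)) + Real.log ((n:ℝ)+2) := by
    rw [Real.log_mul (by positivity) (by positivity)]
  rw [e1, e2] at key
  push_cast
  have g1 : ((n:ℝ) + 1 + 1) = (n:ℝ) + 2 := by ring
  have g2 : ((n:ℝ) - 0) = (n:ℝ) := by ring
  have g3 : ((n:ℝ) + 0 + 1) = (n:ℝ) + 1 := by ring
  rw [g1, g2, g3]
  have g4 : β * (2*1+1)/(n:ℝ) = 2*β/n + β*(2*0+1)/n := by ring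
  rw [g4]
  linarith [key]


lemma pi_pos (N n : ℕ) (β : ℝ) (hN : N = 2 * n) (k : ℕ) (hk : k ≤ n) :
    0 < barPiW N β k := by
  unfold barPiW
  have hch : 0 < N.choose ((N - 2 * k) / 2) := Nat.choose_pos (by omega)
  have : (0:ℝ) < (N.choose ((N - 2 * k) / 2) : ℝ) := by exact_mod_cast hch
  positivity

-- the binomial identity, real form
lemma choose_ratio (N n k : ℕ) (hN : N = 2 * n) (hk : k + 1 ≤ n) :
    ((N.choose (n - k) : ℝ)) * ((n : ℝ) - k) = (N.choose (n - k - 1) : ℝ) * ((n : ℝ) + k + 1) := by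
  have h1 : N.choose (n - k - 1 + 1) * (n - k - 1 + 1) = N.choose (n - k - 1) * (N - (n - k - 1)) :=
    Nat.choose_succ_right_eq N (n - k - 1)
  have e1 : n - k - 1 + 1 = n - k := by omega
  have e2 : N - (n - k - 1) = n + k + 1 := by omega
  rw [e1, e2] at h1
  have hcast : ((N.choose (n - k) * (n - k) : ℕ) : ℝ) = ((N.choose (n - k - 1) * (n + k + 1) : ℕ) : ℝ) := by
    exact_mod_cast congrArg (Nat.cast (R := ℝ)) h1
  push_cast at hcast
  have e3 : ((n - k : ℕ) : ℝ) = (n : ℝ) - k := by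
    have : k ≤ n := by omega
    push_cast [this]; ring
  rw [e3] at hcast
  linarith [hcast]


lemma pi01 (N n : ℕ) (β : ℝ) (hβ : 0 ≤ β) (hN : N = 2 * n) (hn : 1 ≤ n) :
    barPiW N β 0 ≤ barPiW N β 1 := by
  have hn0 : (0:ℝ) < n := by
    have : 0 < n := by omega
    exact_mod_cast hn
  have hCr := choose_ratio N n 0 hN (by omega)
  unfold barPiW
  rw [if_pos rfl, if_neg (by omega)]
  have harg0 : (N - 2 * 0) / 2 = n - 0 := by omega
  have harg1 : (N - 2 * 1) / 2 = n - 1 := by omega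
  rw [harg0, harg1]
  have h0 : n - 0 = n := by omega
  rw [h0]
  have hC1pos : (0:ℝ) < (N.choose (n-1) : ℝ) := by exact_mod_cast Nat.choose_pos (by omega)
  have hCpos : (0:ℝ) < (N.choose n : ℝ) := by exact_mod_cast Nat.choose_pos (by omega)
  have hC : (N.choose n : ℝ) ≤ 2 * (N.choose (n-1) : ℝ) := by
    simp only [Nat.sub_zero, Nat.cast_zero, sub_zero, add_zero] at hCr
    have hn1 : (1:ℝ) ≤ n := by exact_mod_cast hn
    nlinarith [hCr, hCpos, hC1pos, hn0, hn1]
  have hE0 : Real.exp (β * (2 * ((0:ℕ):ℝ)) ^ 2 / (2 * N)) = 1 := by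
    norm_num
  have hE1 : (1:ℝ) ≤ Real.exp (β * (2 * ((1:ℕ):ℝ)) ^ 2 / (2 * N)) := by
    apply Real.one_le_exp
    have hNpos : (0:ℝ) < (N:ℝ) := by
      have : 0 < N := by omega
      exact_mod_cast this
    positivity
  rw [hE0]
  calc (1:ℝ) * (N.choose n : ℝ) * 1 = (N.choose n : ℝ) := by ring
    _ ≤ 2 * (N.choose (n-1) : ℝ) := hC
    _ ≤ 2 * (N.choose (n-1) : ℝ) * Real.exp (β * (2 * ((1:ℕ):ℝ)) ^ 2 / (2 * N)) := by
        nlinarith [hC1pos, hE1]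


/-- Reversibility: `π(j+1) · down(j+1) = π(j) · up(j)`. -/
lemma reversible (N n : ℕ) (β p₁ : ℝ) (hN : N = 2 * n) (j : ℕ) (hj : j + 1 ≤ n) :
    barPiW N β (j+1) * barDown N β p₁ (j+1) = barPiW N β j * barUp N p₁ j := by
  have hn0 : (0:ℝ) < n := by
    have h : 0 < n := by omega
    exact_mod_cast h
  have hN0 : (0:ℝ) < N := by
    have h : 0 < N := by omega
    exact_mod_cast h
  have hNr : (N:ℝ) = 2 * n := by
    rw [hN]; push_cast; ring
  have harg1 : (N - 2 * (j+1)) / 2 = n - j - 1 := by omega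
  have harg0 : (N - 2 * j) / 2 = n - j := by omega
  have hexp : Real.exp (β * (2 * ((j:ℝ)+1)) ^ 2 / (2 * N)) * Real.exp (2 * β * (1 - 2 * ((j:ℝ)+1)) / N)
      = Real.exp (β * (2 * (j:ℝ)) ^ 2 / (2 * N)) := by
    rw [← Real.exp_add]
    congr 1
    rw [hNr]
    field_simp
    ring
  have hCr := choose_ratio N n j hN hj
  have hC2 : (N.choose (n - j - 1) : ℝ) * ((N:ℝ) + 2*(j:ℝ) + 2) = (N.choose (n - j) : ℝ) * ((N:ℝ) - 2*(j:ℝ)) := by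
    rw [hNr]
    linear_combination (-2) * hCr
  have hNinv : (N:ℝ) * (N:ℝ)⁻¹ = 1 := mul_inv_cancel₀ (ne_of_gt hN0)
  rcases Nat.eq_zero_or_pos j with hj0 | hjpos
  · subst hj0
    unfold barPiW barUp barDown
    rw [if_neg (by omega), if_pos rfl, if_pos rfl, harg1, harg0]
    push_cast
    norm_num
    push_cast at hexp hC2
    norm_num at hexp hC2
    linear_combination (Real.exp (β * 4 / (2 * (N:ℝ))) * Real.exp (-(2 * β) / (N:ℝ)) * p₁ / (2 * (N:ℝ))) * hC2
      + ((N.choose n : ℝ) * p₁ / 2) * hexp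
      + (Real.exp (β * 4 / (2 * (N:ℝ))) * Real.exp (-(2 * β) / (N:ℝ)) * p₁ * (N.choose n : ℝ) / 2) * hNinv
  · unfold barPiW barUp barDown
    rw [if_neg (by omega), if_neg (by omega), if_neg (by omega), harg1, harg0]
    push_cast
    rw [← hexp]
    linear_combination (Real.exp (β * (2 * ((j:ℝ)+1)) ^ 2 / (2 * N)) *
      Real.exp (2 * β * (1 - 2 * ((j:ℝ)+1)) / N) * p₁ / (2 * (N:ℝ))) * hC2


/-- abbreviations for the effective up/down rates (with boundary cutoffs) -/
noncomputable def upE (N : ℕ) (p₁ : ℝ) (n k : ℕ) : ℝ :=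
  if k + 1 ≤ n then barUp N p₁ k else 0
noncomputable def dnE (N : ℕ) (β p₁ : ℝ) (k : ℕ) : ℝ :=
  if k = 0 then 0 else barDown N β p₁ k

lemma row_sum (N n : ℕ) (β p₁ : ℝ) (hN : N = 2 * n) (f : ℕ → ℝ) (k : ℕ) (hk : k ≤ n) :
    ∑ j ∈ Finset.range (n + 1), barQ N β p₁ k j * f j
      = f k - upE N p₁ n k * (f k - f (k + 1)) - dnE N β p₁ k * (f k - f (k - 1)) := by
  have hN2 : N / 2 = n := by omega
  have hsplit : ∀ j, barQ N β p₁ k j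
      = (if j = k + 1 ∧ k + 1 ≤ n then barUp N p₁ k else 0)
      + (if j + 1 = k then barDown N β p₁ k else 0)
      + (if j = k then (1 - upE N p₁ n k - dnE N β p₁ k) else 0) := by
    intro j
    unfold barQ upE dnE
    rw [hN2]
    split_ifs <;> first | ring1 | (exfalso; omega)
  calc ∑ j ∈ Finset.range (n + 1), barQ N β p₁ k j * f j
      = ∑ j ∈ Finset.range (n + 1),
          ((if j = k + 1 ∧ k + 1 ≤ n then barUp N p₁ k * f j else 0)
          + ((if j + 1 = k then barDown N β p₁ k * f j else 0)
          + (if j = k then (1 - upE N p₁ n k - dnE N β p₁ k) * f j else 0))) := by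
        apply Finset.sum_congr rfl
        intro j _
        rw [hsplit j]
        unfold upE dnE
        split_ifs <;> ring
    _ = upE N p₁ n k * f (k+1) + (dnE N β p₁ k * f (k-1)
          + (1 - upE N p₁ n k - dnE N β p₁ k) * f k) := by
        rw [Finset.sum_add_distrib, Finset.sum_add_distrib]
        congr 1
        · -- up part
          by_cases hc : k + 1 ≤ n
          · rw [upE, if_pos hc]
            have : ∀ j, (if j = k + 1 ∧ k + 1 ≤ n then barUp N p₁ k * f j else 0)
                = (if j = k + 1 then barUp N p₁ k * f j else 0) := by
              intro j; by_cases h : j = k + 1 <;> simp [h, hc]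
            simp_rw [this]
            rw [Finset.sum_ite_eq' (Finset.range (n+1)) (k+1) (fun j => barUp N p₁ k * f j)]
            rw [if_pos (by simp; omega)]
          · rw [upE, if_neg hc]
            rw [Finset.sum_eq_zero]
            · ring
            · intro j hj
              rw [if_neg (by tauto)]
        congr 1
        · -- down part
          rcases Nat.eq_zero_or_pos k with hk0 | hkpos
          · subst hk0
            rw [dnE, if_pos rfl]
            rw [Finset.sum_eq_zero]
            · ring
            · intro j hj
              rw [if_neg (by omega)]
          · rw [dnE, if_neg (by omega)]
            have hrw : ∀ j, (if j + 1 = k then barDown N β p₁ k * f j else 0)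
                = (if j = k - 1 then barDown N β p₁ k * f j else 0) := by
              intro j
              by_cases h : j + 1 = k
              · rw [if_pos h, if_pos (by omega)]
              · rw [if_neg h, if_neg (by omega)]
            simp_rw [hrw]
            rw [Finset.sum_ite_eq' (Finset.range (n+1)) (k-1) (fun j => barDown N β p₁ k * f j)]
            rw [if_pos (by simp; omega)]
        · -- diagonal part
          rw [Finset.sum_ite_eq' (Finset.range (n+1)) k (fun j => (1 - upE N p₁ n k - dnE N β p₁ k) * f j)]
          rw [if_pos (by simp; omega)]
    _ = f k - upE N p₁ n k * (f k - f (k + 1)) - dnE N β p₁ k * (f k - f (k - 1)) := by ring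


lemma Ncast_pos (N n : ℕ) (hN : N = 2 * n) (hn : 1 ≤ n) : (0:ℝ) < N := by
  have h : 0 < N := by omega
  exact_mod_cast h

lemma barUp_nonneg (N n : ℕ) (p₁ : ℝ) (hN : N = 2 * n) (hp1 : 0 ≤ p₁) (k : ℕ) (hk : k ≤ n) :
    0 ≤ barUp N p₁ k := by
  unfold barUp
  split_ifs
  · positivity
  · have h2k : 2 * (k:ℝ) ≤ N := by
      have : 2 * k ≤ N := by omega
      exact_mod_cast this
    have hN0 : (0:ℝ) ≤ N := by positivity
    have : (0:ℝ) ≤ (N:ℝ) - 2 * k := by linarith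
    positivity

lemma barDown_nonneg (N : ℕ) (β p₁ : ℝ) (hp1 : 0 ≤ p₁) (k : ℕ) :
    0 ≤ barDown N β p₁ k := by
  unfold barDown
  positivity

lemma upE_nonneg (N n : ℕ) (p₁ : ℝ) (hN : N = 2 * n) (hp1 : 0 ≤ p₁) (k : ℕ) :
    0 ≤ upE N p₁ n k := by
  unfold upE
  split_ifs with h
  · exact barUp_nonneg N n p₁ hN hp1 k (by omega)
  · exact le_refl _
lemma dnE_nonneg (N : ℕ) (β p₁ : ℝ) (hp1 : 0 ≤ p₁) (k : ℕ) :
    0 ≤ dnE N β p₁ k := by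
  unfold dnE
  split_ifs
  · exact le_refl _
  · exact barDown_nonneg N β p₁ hp1 k

lemma updn_le (N n : ℕ) (β p₁ : ℝ) (hN : N = 2 * n) (hn : 1 ≤ n) (hβ : 0 < β) (hp1 : 0 ≤ p₁)
    (k : ℕ) (hk : k ≤ n) : upE N p₁ n k + dnE N β p₁ k ≤ p₁ / 2 := by
  have hN0 : (0:ℝ) < N := Ncast_pos N n hN hn
  rcases Nat.eq_zero_or_pos k with hk0 | hkpos
  · subst hk0
    have h1 : dnE N β p₁ 0 = 0 := by unfold dnE; simp
    have h2 : upE N p₁ n 0 ≤ p₁ / 2 := by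
      unfold upE barUp
      split_ifs <;> first | exact le_refl _ | positivity | omega
    linarith
  · have h2k : 2 * (k:ℝ) ≤ N := by
      have h : 2 * k ≤ N := by omega
      exact_mod_cast h
    have hk1 : (1:ℝ) ≤ (k:ℝ) := by exact_mod_cast hkpos
    have hNk : (0:ℝ) ≤ (N:ℝ) - 2 * k := by linarith
    have hexp : Real.exp (2 * β * (1 - 2 * (k : ℝ)) / N) ≤ 1 := by
      rw [Real.exp_le_one_iff]
      apply div_nonpos_of_nonpos_of_nonneg
      · nlinarith
      · positivity
    have hBU : barUp N p₁ k = p₁ / 4 * (((N : ℝ) - 2 * k) / N) := by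
      unfold barUp; rw [if_neg (by omega)]
    have hup : upE N p₁ n k ≤ p₁ / 4 * (((N : ℝ) - 2 * k) / N) := by
      unfold upE; rw [hBU]; split_ifs
      · exact le_refl _
      · positivity
    have hdnv : dnE N β p₁ k = barDown N β p₁ k := by
      unfold dnE; rw [if_neg (by omega)]
    have hdn : barDown N β p₁ k ≤ p₁ / 4 * (((N : ℝ) + 2 * k) / N) := by
      unfold barDown
      have hfac : 0 ≤ p₁ / 4 * (((N : ℝ) + 2 * k) / N) := by positivity
      nlinarith [hfac, hexp]
    have hsum : p₁ / 4 * (((N : ℝ) - 2 * k) / N) + p₁ / 4 * (((N : ℝ) + 2 * k) / N) = p₁ / 2 := by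
      field_simp
      ring
    rw [hdnv]
    linarith

lemma gershgorin (N n : ℕ) (β p₁ : ℝ) (hN : N = 2 * n) (hn : 1 ≤ n) (hβ : 0 < β)
    (hp1 : 0 < p₁) (ev : ℝ) (f : ℕ → ℝ)
    (heig : ∀ k ≤ n, ∑ j ∈ Finset.range (n + 1), barQ N β p₁ k j * f j = ev * f k)
    (hnz : ∃ k ≤ n, f k ≠ 0) : 1 - p₁ ≤ ev := by
  obtain ⟨K, hKmem, hKmax⟩ := Finset.exists_max_image (Finset.range (n+1)) (fun j => |f j|)
    ⟨0, by simp⟩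
  have hKn : K ≤ n := by have := Finset.mem_range.mp hKmem; omega
  set Mv := |f K| with hMv
  obtain ⟨k₀, hk₀, hfk₀⟩ := hnz
  have hMvpos : 0 < Mv := by
    have h1 : |f k₀| ≤ Mv := hKmax k₀ (Finset.mem_range.mpr (by omega))
    have h2 : 0 < |f k₀| := abs_pos.mpr hfk₀
    linarith
  set u := upE N p₁ n K with hu
  set d := dnE N β p₁ K with hd
  have hEQ : (1 - ev) * f K = u * (f K - f (K + 1)) + d * (f K - f (K - 1)) := by
    have := heig K hKn
    rw [row_sum N n β p₁ hN f K hKn] at this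
    linarith [this]
  have hunn : 0 ≤ u := upE_nonneg N n p₁ hN (le_of_lt hp1) K
  have hdnn : 0 ≤ d := dnE_nonneg N β p₁ (le_of_lt hp1) K
  have hub : u * |f K - f (K + 1)| ≤ u * (2 * Mv) := by
    rw [hu]
    unfold upE
    split_ifs with h
    · apply mul_le_mul_of_nonneg_left _ (barUp_nonneg N n p₁ hN (le_of_lt hp1) K (by omega))
      have h1 : |f (K+1)| ≤ Mv := hKmax (K+1) (Finset.mem_range.mpr (by omega))
      calc |f K - f (K+1)| ≤ |f K| + |f (K+1)| := abs_sub _ _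
        _ ≤ 2 * Mv := by rw [← hMv]; linarith
    · simp
  have hdb : d * |f K - f (K - 1)| ≤ d * (2 * Mv) := by
    rw [hd]
    unfold dnE
    split_ifs with h
    · simp
    · apply mul_le_mul_of_nonneg_left _ (barDown_nonneg N β p₁ (le_of_lt hp1) K)
      have h1 : |f (K-1)| ≤ Mv := hKmax (K-1) (Finset.mem_range.mpr (by omega))
      calc |f K - f (K-1)| ≤ |f K| + |f (K-1)| := abs_sub _ _
        _ ≤ 2 * Mv := by rw [← hMv]; linarith
  have habs : |1 - ev| * Mv ≤ p₁ * Mv := by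
    calc |1 - ev| * Mv = |(1 - ev) * f K| := by rw [abs_mul, ← hMv]
      _ = |u * (f K - f (K + 1)) + d * (f K - f (K - 1))| := by rw [hEQ]
      _ ≤ |u * (f K - f (K + 1))| + |d * (f K - f (K - 1))| := abs_add_le _ _
      _ = u * |f K - f (K + 1)| + d * |f K - f (K - 1)| := by
          rw [abs_mul, abs_mul, abs_of_nonneg hunn, abs_of_nonneg hdnn]
      _ ≤ u * (2 * Mv) + d * (2 * Mv) := add_le_add hub hdb
      _ = (u + d) * (2 * Mv) := by ring
      _ ≤ (p₁ / 2) * (2 * Mv) := by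
          apply mul_le_mul_of_nonneg_right (updn_le N n β p₁ hN hn hβ (le_of_lt hp1) K hKn)
          linarith
      _ = p₁ * Mv := by ring
  have h1 : |1 - ev| ≤ p₁ := le_of_mul_le_mul_right habs hMvpos
  have := abs_le.mp h1
  linarith [this.2]


section main
variable (N n : ℕ) (β p₁ : ℝ)

lemma ID_up (g : ℕ → ℝ) :
    ∑ k ∈ Finset.range (n+1), barPiW N β k * upE N p₁ n k * g k
      = ∑ j ∈ Finset.range n, barPiW N β j * barUp N p₁ j * g j := by
  rw [Finset.sum_range_succ]
  have hlast : barPiW N β n * upE N p₁ n n * g n = 0 := by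
    unfold upE; rw [if_neg (by omega)]; ring
  rw [hlast, add_zero]
  apply Finset.sum_congr rfl
  intro j hj
  have : j < n := Finset.mem_range.mp hj
  unfold upE
  rw [if_pos (by omega)]

lemma ID_dn (hN : N = 2 * n) (g : ℕ → ℝ) :
    ∑ k ∈ Finset.range (n+1), barPiW N β k * dnE N β p₁ k * g k
      = ∑ j ∈ Finset.range n, barPiW N β j * barUp N p₁ j * g (j+1) := by
  rw [Finset.sum_range_succ']
  have h0 : barPiW N β 0 * dnE N β p₁ 0 * g 0 = 0 := by
    unfold dnE; rw [if_pos rfl]; ring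
  rw [h0, add_zero]
  apply Finset.sum_congr rfl
  intro j hj
  have hj' : j < n := Finset.mem_range.mp hj
  have hd : dnE N β p₁ (j+1) = barDown N β p₁ (j+1) := by
    unfold dnE; rw [if_neg (by omega)]
  rw [hd, mul_assoc, mul_comm (barDown N β p₁ (j+1)) (g (j+1)), ← mul_assoc,
    mul_assoc (barPiW N β (j+1)) (g (j+1)) (barDown N β p₁ (j+1)),
    mul_comm (g (j+1)) (barDown N β p₁ (j+1)), ← mul_assoc,
    reversible N n β p₁ hN j (by omega)]

lemma hB_eq (hN : N = 2 * n) (ev : ℝ) (f : ℕ → ℝ)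
    (hEQ : ∀ k ≤ n, (1 - ev) * f k
      = upE N p₁ n k * (f k - f (k+1)) + dnE N β p₁ k * (f k - f (k-1))) :
    (1 - ev) * (∑ k ∈ Finset.range (n+1), barPiW N β k * f k ^ 2)
      = ∑ j ∈ Finset.range n, (barPiW N β j * barUp N p₁ j) * (f (j+1) - f j)^2 := by
  calc (1 - ev) * (∑ k ∈ Finset.range (n+1), barPiW N β k * f k ^ 2)
      = ∑ k ∈ Finset.range (n+1), barPiW N β k * ((1 - ev) * f k) * f k := by
        rw [Finset.mul_sum]; exact Finset.sum_congr rfl fun k _ => by ring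
    _ = ∑ k ∈ Finset.range (n+1), (barPiW N β k * upE N p₁ n k * (f k * (f k - f (k+1)))
          + barPiW N β k * dnE N β p₁ k * (f k * (f k - f (k-1)))) := by
        apply Finset.sum_congr rfl
        intro k hk
        rw [hEQ k (by have := Finset.mem_range.mp hk; omega)]
        ring
    _ = (∑ k ∈ Finset.range (n+1), barPiW N β k * upE N p₁ n k * (f k * (f k - f (k+1))))
          + ∑ k ∈ Finset.range (n+1), barPiW N β k * dnE N β p₁ k * (f k * (f k - f (k-1))) :=
        Finset.sum_add_distrib
    _ = (∑ j ∈ Finset.range n, barPiW N β j * barUp N p₁ j * (f j * (f j - f (j+1))))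
          + ∑ j ∈ Finset.range n, barPiW N β j * barUp N p₁ j * (f (j+1) * (f (j+1) - f (j+1-1))) := by
        rw [ID_up, ID_dn N n β p₁ hN]
    _ = ∑ j ∈ Finset.range n, (barPiW N β j * barUp N p₁ j) * (f (j+1) - f j)^2 := by
        rw [← Finset.sum_add_distrib]
        apply Finset.sum_congr rfl
        intro j _
        simp only [Nat.add_sub_cancel]
        ring

lemma hA_eq (hN : N = 2 * n) (ev : ℝ) (f : ℕ → ℝ)
    (hEQ : ∀ k ≤ n, (1 - ev) * f k
      = upE N p₁ n k * (f k - f (k+1)) + dnE N β p₁ k * (f k - f (k-1))) :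
    (1 - ev) * (∑ k ∈ Finset.range (n+1), barPiW N β k * f k) = 0 := by
  calc (1 - ev) * (∑ k ∈ Finset.range (n+1), barPiW N β k * f k)
      = ∑ k ∈ Finset.range (n+1), barPiW N β k * ((1 - ev) * f k) := by
        rw [Finset.mul_sum]; exact Finset.sum_congr rfl fun k _ => by ring
    _ = ∑ k ∈ Finset.range (n+1), (barPiW N β k * upE N p₁ n k * (f k - f (k+1))
          + barPiW N β k * dnE N β p₁ k * (f k - f (k-1))) := by
        apply Finset.sum_congr rfl
        intro k hk
        rw [hEQ k (by have := Finset.mem_range.mp hk; omega)]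
        ring
    _ = (∑ k ∈ Finset.range (n+1), barPiW N β k * upE N p₁ n k * (f k - f (k+1)))
          + ∑ k ∈ Finset.range (n+1), barPiW N β k * dnE N β p₁ k * (f k - f (k-1)) :=
        Finset.sum_add_distrib
    _ = (∑ j ∈ Finset.range n, barPiW N β j * barUp N p₁ j * (f j - f (j+1)))
          + ∑ j ∈ Finset.range n, barPiW N β j * barUp N p₁ j * (f (j+1) - f (j+1-1)) := by
        rw [ID_up, ID_dn N n β p₁ hN]
    _ = ∑ j ∈ Finset.range n, (barPiW N β j * barUp N p₁ j * (f j - f (j+1))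
          + barPiW N β j * barUp N p₁ j * (f (j+1) - f (j+1-1))) := (Finset.sum_add_distrib).symm
    _ = 0 := by
        apply Finset.sum_eq_zero
        intro j _
        simp only [Nat.add_sub_cancel]
        ring

/-- variance expansion -/
lemma VExp (f : ℕ → ℝ) :
    ∑ k ∈ Finset.range (n+1), ∑ l ∈ Finset.range (n+1),
        barPiW N β k * barPiW N β l * (f k - f l)^2
      = 2 * ((∑ k ∈ Finset.range (n+1), barPiW N β k)
            * (∑ k ∈ Finset.range (n+1), barPiW N β k * f k ^ 2))
        - 2 * ((∑ k ∈ Finset.range (n+1), barPiW N β k * f k)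
            * (∑ k ∈ Finset.range (n+1), barPiW N β k * f k)) := by
  set s := Finset.range (n+1)
  have step1 : ∀ k l : ℕ, barPiW N β k * barPiW N β l * (f k - f l)^2
      = (barPiW N β k * f k ^ 2) * barPiW N β l + barPiW N β k * (barPiW N β l * f l ^ 2)
        - 2 * ((barPiW N β k * f k) * (barPiW N β l * f l)) := by
    intro k l; ring
  calc ∑ k ∈ s, ∑ l ∈ s, barPiW N β k * barPiW N β l * (f k - f l)^2
      = ∑ k ∈ s, ((barPiW N β k * f k ^ 2) * ∑ l ∈ s, barPiW N β l
          + barPiW N β k * (∑ l ∈ s, barPiW N β l * f l ^ 2)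
          - 2 * ((barPiW N β k * f k) * ∑ l ∈ s, (barPiW N β l * f l))) := by
        apply Finset.sum_congr rfl
        intro k _
        rw [Finset.mul_sum, Finset.mul_sum, Finset.mul_sum, Finset.mul_sum]
        rw [← Finset.sum_add_distrib, ← Finset.sum_sub_distrib]
        apply Finset.sum_congr rfl
        intro l _
        ring
    _ = (∑ k ∈ s, barPiW N β k * f k ^ 2) * (∑ l ∈ s, barPiW N β l)
          + (∑ k ∈ s, barPiW N β k) * (∑ l ∈ s, barPiW N β l * f l ^ 2)
          - 2 * ((∑ k ∈ s, barPiW N β k * f k) * (∑ l ∈ s, (barPiW N β l * f l))) := by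
        rw [Finset.sum_sub_distrib, Finset.sum_add_distrib, ← Finset.sum_mul, ← Finset.sum_mul,
          ← Finset.mul_sum, ← Finset.sum_mul]
    _ = _ := by ring

lemma PW0 (f : ℕ → ℝ) (k l : ℕ) (hkl : k ≤ l) (hl : l ≤ n) :
    (f l - f k)^2 ≤ (n:ℝ) * ∑ j ∈ Finset.range n,
      (if k ≤ j ∧ j < l then (1:ℝ) else 0) * (f (j+1) - f j)^2 := by
  have htel : ∑ j ∈ Finset.Ico k l, (f (j+1) - f j) = f l - f k := by
    rw [Finset.sum_Ico_eq_sub _ hkl, Finset.sum_range_sub, Finset.sum_range_sub]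
    ring
  have hCS := sq_sum_le_card_mul_sum_sq (s := Finset.Ico k l) (f := fun j => f (j+1) - f j)
  rw [htel] at hCS
  have hcard : (Finset.Ico k l).card = l - k := Nat.card_Ico k l
  have hfil : ∑ j ∈ Finset.range n, (if k ≤ j ∧ j < l then (1:ℝ) else 0) * (f (j+1) - f j)^2
      = ∑ j ∈ Finset.Ico k l, (f (j+1) - f j)^2 := by
    simp only [ite_mul, one_mul, zero_mul]
    rw [← Finset.sum_filter]
    apply Finset.sum_congr _ (fun _ _ => rfl)
    ext j
    simp only [Finset.mem_filter, Finset.mem_range, Finset.mem_Ico]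
    omega
  rw [hfil]
  have hsq : (0:ℝ) ≤ ∑ j ∈ Finset.Ico k l, (f (j+1) - f j)^2 :=
    Finset.sum_nonneg fun _ _ => sq_nonneg _
  have hle : ((Finset.Ico k l).card : ℝ) ≤ (n:ℝ) := by
    rw [hcard]
    have : l - k ≤ n := by omega
    exact_mod_cast this
  calc (f l - f k)^2 ≤ ((Finset.Ico k l).card : ℝ) * ∑ j ∈ Finset.Ico k l, (f (j+1) - f j)^2 := hCS
    _ ≤ (n:ℝ) * ∑ j ∈ Finset.Ico k l, (f (j+1) - f j)^2 := mul_le_mul_of_nonneg_right hle hsq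

lemma PW (f : ℕ → ℝ) (k l : ℕ) (hk : k ≤ n) (hl : l ≤ n) :
    (f k - f l)^2 ≤ (n:ℝ) * ∑ j ∈ Finset.range n,
      ((if k ≤ j ∧ j < l then (1:ℝ) else 0) + (if l ≤ j ∧ j < k then 1 else 0))
        * (f (j+1) - f j)^2 := by
  have hn0 : (0:ℝ) ≤ n := by positivity
  have hmono : ∀ c : ℕ → Prop, ∀ inst : DecidablePred c,
      (∑ j ∈ Finset.range n, (if c j then (1:ℝ) else 0) * (f (j+1) - f j)^2)
      ≤ ∑ j ∈ Finset.range n,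
        ((if k ≤ j ∧ j < l then (1:ℝ) else 0) + (if l ≤ j ∧ j < k then 1 else 0))
          * (f (j+1) - f j)^2 → True := fun _ _ _ => trivial
  rcases le_total k l with h | h
  · calc (f k - f l)^2 = (f l - f k)^2 := by ring
      _ ≤ (n:ℝ) * ∑ j ∈ Finset.range n,
            (if k ≤ j ∧ j < l then (1:ℝ) else 0) * (f (j+1) - f j)^2 := PW0 n f k l h hl
      _ ≤ _ := by
          apply mul_le_mul_of_nonneg_left _ hn0
          apply Finset.sum_le_sum
          intro j _
          apply mul_le_mul_of_nonneg_right _ (sq_nonneg _)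
          have : (0:ℝ) ≤ (if l ≤ j ∧ j < k then (1:ℝ) else 0) := by split_ifs <;> norm_num
          linarith
  · calc (f k - f l)^2 = (f k - f l)^2 := rfl
      _ ≤ (n:ℝ) * ∑ j ∈ Finset.range n,
            (if l ≤ j ∧ j < k then (1:ℝ) else 0) * (f (j+1) - f j)^2 := PW0 n f l k h hk
      _ ≤ _ := by
          apply mul_le_mul_of_nonneg_left _ hn0
          apply Finset.sum_le_sum
          intro j _
          apply mul_le_mul_of_nonneg_right _ (sq_nonneg _)
          have : (0:ℝ) ≤ (if k ≤ j ∧ j < l then (1:ℝ) else 0) := by split_ifs <;> norm_num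
          linarith

lemma HS (j : ℕ) :
    ∑ k ∈ Finset.range (n+1), ∑ l ∈ Finset.range (n+1), barPiW N β k * barPiW N β l *
        ((if k ≤ j ∧ j < l then (1:ℝ) else 0) + (if l ≤ j ∧ j < k then 1 else 0))
      = 2 * ((∑ k ∈ Finset.range (n+1), if k ≤ j then barPiW N β k else 0)
           * (∑ l ∈ Finset.range (n+1), if j < l then barPiW N β l else 0)) := by
  have key : ∀ k l : ℕ, barPiW N β k * barPiW N β l *
        ((if k ≤ j ∧ j < l then (1:ℝ) else 0) + (if l ≤ j ∧ j < k then 1 else 0))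
      = (if k ≤ j then barPiW N β k else 0) * (if j < l then barPiW N β l else 0)
        + (if j < k then barPiW N β k else 0) * (if l ≤ j then barPiW N β l else 0) := by
    intro k l
    split_ifs <;> first | ring1 | (exfalso; omega)
  simp_rw [key]
  simp only [Finset.sum_add_distrib]
  rw [← Finset.sum_mul_sum, ← Finset.sum_mul_sum]
  ring

lemma EXC (f : ℕ → ℝ) :
    ∑ k ∈ Finset.range (n+1), ∑ l ∈ Finset.range (n+1), (barPiW N β k * barPiW N β l *
      ((n:ℝ) * ∑ j ∈ Finset.range n,
        ((if k ≤ j ∧ j < l then (1:ℝ) else 0) + (if l ≤ j ∧ j < k then 1 else 0))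
          * (f (j+1) - f j)^2))
    = (n:ℝ) * ∑ j ∈ Finset.range n,
        (2 * ((∑ k ∈ Finset.range (n+1), if k ≤ j then barPiW N β k else 0)
            * (∑ l ∈ Finset.range (n+1), if j < l then barPiW N β l else 0)))
          * (f (j+1) - f j)^2 := by
  have swap : ∑ k ∈ Finset.range (n+1), ∑ l ∈ Finset.range (n+1), (barPiW N β k * barPiW N β l *
      ((n:ℝ) * ∑ j ∈ Finset.range n,
        ((if k ≤ j ∧ j < l then (1:ℝ) else 0) + (if l ≤ j ∧ j < k then 1 else 0))
          * (f (j+1) - f j)^2))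
      = ∑ j ∈ Finset.range n, ∑ k ∈ Finset.range (n+1), ∑ l ∈ Finset.range (n+1),
          (barPiW N β k * barPiW N β l *
            ((if k ≤ j ∧ j < l then (1:ℝ) else 0) + (if l ≤ j ∧ j < k then 1 else 0)))
          * ((n:ℝ) * (f (j+1) - f j)^2) := by
    calc _ = ∑ k ∈ Finset.range (n+1), ∑ l ∈ Finset.range (n+1), ∑ j ∈ Finset.range n,
          (barPiW N β k * barPiW N β l *
            ((if k ≤ j ∧ j < l then (1:ℝ) else 0) + (if l ≤ j ∧ j < k then 1 else 0)))
          * ((n:ℝ) * (f (j+1) - f j)^2) := by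
          apply Finset.sum_congr rfl
          intro k _
          apply Finset.sum_congr rfl
          intro l _
          rw [Finset.mul_sum, Finset.mul_sum]
          apply Finset.sum_congr rfl
          intro j _
          ring
      _ = ∑ k ∈ Finset.range (n+1), ∑ j ∈ Finset.range n, ∑ l ∈ Finset.range (n+1),
          (barPiW N β k * barPiW N β l *
            ((if k ≤ j ∧ j < l then (1:ℝ) else 0) + (if l ≤ j ∧ j < k then 1 else 0)))
          * ((n:ℝ) * (f (j+1) - f j)^2) := by
          apply Finset.sum_congr rfl
          intro k _
          exact Finset.sum_comm
      _ = _ := Finset.sum_comm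
  rw [swap, Finset.mul_sum]
  apply Finset.sum_congr rfl
  intro j _
  calc ∑ k ∈ Finset.range (n+1), ∑ l ∈ Finset.range (n+1),
        (barPiW N β k * barPiW N β l *
          ((if k ≤ j ∧ j < l then (1:ℝ) else 0) + (if l ≤ j ∧ j < k then 1 else 0)))
        * ((n:ℝ) * (f (j+1) - f j)^2)
      = (∑ k ∈ Finset.range (n+1), ∑ l ∈ Finset.range (n+1),
          barPiW N β k * barPiW N β l *
          ((if k ≤ j ∧ j < l then (1:ℝ) else 0) + (if l ≤ j ∧ j < k then 1 else 0)))
        * ((n:ℝ) * (f (j+1) - f j)^2) := by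
        rw [Finset.sum_mul]
        apply Finset.sum_congr rfl
        intro k _
        rw [Finset.sum_mul]
    _ = (2 * ((∑ k ∈ Finset.range (n+1), if k ≤ j then barPiW N β k else 0)
           * (∑ l ∈ Finset.range (n+1), if j < l then barPiW N β l else 0)))
        * ((n:ℝ) * (f (j+1) - f j)^2) := by rw [HS]
    _ = _ := by ring

end main


lemma ratio_eq (N n : ℕ) (β : ℝ) (hN : N = 2 * n) (k : ℕ) (hk1 : 1 ≤ k) (hk : k + 1 ≤ n) :
    barPiW N β (k+1) * ((n:ℝ) + k + 1)
      = barPiW N β k * (((n:ℝ) - k) * Real.exp (β * (2 * k + 1) / n)) := by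
  have hn0 : (0:ℝ) < n := by
    have h : 0 < n := by omega
    exact_mod_cast h
  set t : ℝ := β * (2 * k + 1) / n with ht
  have hCr := choose_ratio N n k hN hk
  have harg1 : (N - 2 * (k+1)) / 2 = n - k - 1 := by omega
  have harg0 : (N - 2 * k) / 2 = n - k := by omega
  have hexp : Real.exp (β * (2 * ((k:ℝ)+1)) ^ 2 / (2 * N))
      = Real.exp (β * (2 * (k:ℝ)) ^ 2 / (2 * N)) * Real.exp t := by
    rw [← Real.exp_add]
    congr 1
    rw [ht, hN]
    have h2n : ((2 * n : ℕ):ℝ) = 2 * (n:ℝ) := by push_cast; ring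
    rw [h2n]
    field_simp
    ring
  unfold barPiW
  rw [if_neg (by omega), if_neg (by omega), harg1, harg0]
  push_cast
  rw [hexp]
  linear_combination (-2 * Real.exp (β * (2 * (k:ℝ)) ^ 2 / (2 * N)) * Real.exp t) * hCr

lemma score_iff (β : ℝ) (n k : ℕ) (hk : k + 1 ≤ n) :
    (sfun β n k ≤ 0 ↔ ((n:ℝ) - k) * Real.exp (β * (2 * k + 1) / n) ≤ (n:ℝ) + k + 1)
    ∧ (0 ≤ sfun β n k ↔ (n:ℝ) + k + 1 ≤ ((n:ℝ) - k) * Real.exp (β * (2 * k + 1) / n)) := by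
  have hnk : (0:ℝ) < (n:ℝ) - k := by
    have : (k:ℝ) + 1 ≤ n := by exact_mod_cast hk
    linarith
  have hnk2 : (0:ℝ) < (n:ℝ) + k + 1 := by positivity
  set t : ℝ := β * (2 * k + 1) / n with ht
  have hlm : Real.log (((n:ℝ) - k) * Real.exp t) = Real.log ((n:ℝ) - k) + t := by
    rw [Real.log_mul (ne_of_gt hnk) (Real.exp_ne_zero _), Real.log_exp]
  constructor
  · constructor
    · intro h
      have h2 : Real.log (((n:ℝ) - k) * Real.exp t) ≤ Real.log ((n:ℝ) + k + 1) := by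
        rw [hlm]; unfold sfun at h; linarith
      exact (Real.log_le_log_iff (by positivity) hnk2).mp h2
    · intro h
      have h2 := Real.log_le_log (by positivity) h
      rw [hlm] at h2
      unfold sfun
      linarith
  · constructor
    · intro h
      have h2 : Real.log ((n:ℝ) + k + 1) ≤ Real.log (((n:ℝ) - k) * Real.exp t) := by
        rw [hlm]; unfold sfun at h; linarith
      exact (Real.log_le_log_iff hnk2 (by positivity)).mp h2
    · intro h
      have h2 := Real.log_le_log hnk2 h
      rw [hlm] at h2
      unfold sfun
      linarith

lemma ratio_le_iff (N n : ℕ) (β : ℝ) (hN : N = 2 * n) (k : ℕ) (hk1 : 1 ≤ k) (hk : k + 1 ≤ n) :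
    (barPiW N β (k+1) ≤ barPiW N β k ↔ sfun β n k ≤ 0) := by
  have hnk2 : (0:ℝ) < (n:ℝ) + k + 1 := by positivity
  have hπ : 0 < barPiW N β k := pi_pos N n β hN k (by omega)
  rw [(score_iff β n k hk).1]
  constructor
  · intro h
    have h2 := mul_le_mul_of_nonneg_right h (le_of_lt hnk2)
    rw [ratio_eq N n β hN k hk1 hk] at h2
    have h3 := (mul_le_mul_iff_right₀ hπ).mp h2
    exact h3
  · intro h
    have h2 := mul_le_mul_of_nonneg_left h (le_of_lt hπ)
    rw [← ratio_eq N n β hN k hk1 hk] at h2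
    exact le_of_mul_le_mul_right h2 hnk2

lemma ratio_ge_iff (N n : ℕ) (β : ℝ) (hN : N = 2 * n) (k : ℕ) (hk1 : 1 ≤ k) (hk : k + 1 ≤ n) :
    (barPiW N β k ≤ barPiW N β (k+1) ↔ 0 ≤ sfun β n k) := by
  have hnk2 : (0:ℝ) < (n:ℝ) + k + 1 := by positivity
  have hπ : 0 < barPiW N β k := pi_pos N n β hN k (by omega)
  rw [(score_iff β n k hk).2]
  constructor
  · intro h
    have h2 := mul_le_mul_of_nonneg_right h (le_of_lt hnk2)
    rw [ratio_eq N n β hN k hk1 hk] at h2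
    exact (mul_le_mul_iff_right₀ hπ).mp h2
  · intro h
    have h2 := mul_le_mul_of_nonneg_left h (le_of_lt hπ)
    rw [← ratio_eq N n β hN k hk1 hk] at h2
    exact le_of_mul_le_mul_right h2 hnk2

lemma unimodal (N n : ℕ) (β : ℝ) (hβ : 0 < β) (hN : N = 2 * n) (hn : 2 ≤ n)
    (hgood : 2 * β ≤ (1 - β) * (n:ℝ) ∨ 1 ≤ β) :
    ∃ m, 1 ≤ m ∧ m ≤ n ∧ (∀ k < m, barPiW N β k ≤ barPiW N β (k+1)) ∧
      (∀ k, m ≤ k → k + 1 ≤ n → barPiW N β (k+1) ≤ barPiW N β k) := by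
  classical
  set T := (Finset.Icc 1 (n-1)).filter (fun k => sfun β n k < 0) with hT
  by_cases hTne : T.Nonempty
  · set m := T.min' hTne with hm
    have hmT : m ∈ T := T.min'_mem hTne
    rw [hT, Finset.mem_filter, Finset.mem_Icc] at hmT
    obtain ⟨⟨hm1, hm2⟩, hms⟩ := hmT
    refine ⟨m, hm1, by omega, ?_, ?_⟩
    · intro k hk
      rcases Nat.eq_zero_or_pos k with hk0 | hkpos
      · subst hk0; exact pi01 N n β (le_of_lt hβ) hN (by omega)
      · have hknotT : k ∉ T := by
          intro hkT
          have := T.min'_le k hkT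
          omega
        rw [hT, Finset.mem_filter, Finset.mem_Icc] at hknotT
        push_neg at hknotT
        have hsk : 0 ≤ sfun β n k := by
          by_contra hc
          push_neg at hc
          exact absurd (hknotT ⟨hkpos, by omega⟩) (by simpa using hc)
        exact (ratio_ge_iff N n β hN k hkpos (by omega)).mpr hsk
    · intro k hkm hkn
      have hx : ∃ x < m, sfun β n (x + 1) - sfun β n x < 0 := by
        rcases hgood with hg | hg
        · have hβ1 : β < 1 := by
            by_contra hc
            push_neg at hc
            have hn0 : (0:ℝ) ≤ (n:ℝ) := by positivity
            nlinarith
          exact ⟨0, by omega, e0_neg β n hβ hβ1 hn hg⟩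
        · have hs0 := s0_nonneg β n hg (by omega)
          have htel : ∑ x ∈ Finset.range m, (sfun β n (x+1) - sfun β n x)
              = sfun β n m - sfun β n 0 := Finset.sum_range_sub _ _
          have hlt : ∑ x ∈ Finset.range m, (sfun β n (x+1) - sfun β n x)
              < ∑ x ∈ Finset.range m, (0:ℝ) := by
            rw [htel, Finset.sum_const, smul_zero]
            linarith
          obtain ⟨x, hxm, hxlt⟩ := Finset.exists_lt_of_sum_lt hlt
          exact ⟨x, Finset.mem_range.mp hxm, by linarith⟩
      have hsk : sfun β n k ≤ 0 :=
        single_cross β n m hm1 (by omega) hms hx k hkm hkn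
      exact (ratio_le_iff N n β hN k (by omega) hkn).mpr hsk
  · refine ⟨n, by omega, le_refl n, ?_, by omega⟩
    intro k hk
    rcases Nat.eq_zero_or_pos k with hk0 | hkpos
    · subst hk0; exact pi01 N n β (le_of_lt hβ) hN (by omega)
    · have hknotT : k ∉ T := fun hkT => hTne ⟨k, hkT⟩
      rw [hT, Finset.mem_filter, Finset.mem_Icc] at hknotT
      push_neg at hknotT
      have hsk : 0 ≤ sfun β n k := by
        by_contra hc
        push_neg at hc
        exact absurd (hknotT ⟨hkpos, by omega⟩) (by simpa using hc)
      exact (ratio_ge_iff N n β hN k hkpos (by omega)).mpr hsk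


lemma up_lb (N n : ℕ) (p₁ : ℝ) (hN : N = 2 * n) (hn : 1 ≤ n) (hp1 : 0 < p₁)
    (j : ℕ) (hj : j < n) : p₁ / (4 * n) ≤ barUp N p₁ j := by
  have hn0 : (0:ℝ) < n := by
    have h : 0 < n := by omega
    exact_mod_cast hn
  have hN0 : (0:ℝ) < N := by
    have h : 0 < N := by omega
    exact_mod_cast h
  have hNr : (N:ℝ) = 2 * n := by rw [hN]; push_cast; ring
  unfold barUp
  split_ifs with h
  · rw [div_le_div_iff₀ (by positivity) (by norm_num)]
    have hn1 : (1:ℝ) ≤ (n:ℝ) := by exact_mod_cast hn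
    have h24 : (2:ℝ) ≤ 4 * n := by linarith
    nlinarith [mul_le_mul_of_nonneg_left h24 (le_of_lt hp1)]
  · have hj1 : (1:ℝ) ≤ (n:ℝ) - j := by
      have : (j:ℝ) + 1 ≤ n := by exact_mod_cast hj
      linarith
    have hexp : (2:ℝ) ≤ (N:ℝ) - 2 * j := by rw [hNr]; linarith
    rw [div_le_iff₀ (by positivity)]
    have key : p₁ / 4 * (((N:ℝ) - 2 * j) / N) * (4 * n) ≥ p₁ / 4 * (2 / (2*n)) * (4 * n) := by
      apply mul_le_mul_of_nonneg_right _ (by positivity)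
      apply mul_le_mul_of_nonneg_left _ (by positivity)
      rw [div_le_div_iff₀ (by positivity) (by positivity), hNr]
      nlinarith
    have : p₁ / 4 * (2 / (2*(n:ℝ))) * (4 * n) = p₁ := by field_simp
    linarith [key, this.symm.le]

lemma barUp_pos (N n : ℕ) (p₁ : ℝ) (hN : N = 2 * n) (hn : 1 ≤ n) (hp1 : 0 < p₁)
    (j : ℕ) (hj : j < n) : 0 < barUp N p₁ j := by
  have h := up_lb N n p₁ hN hn hp1 j hj
  have hn0 : (0:ℝ) < n := by
    have h' : 0 < n := by omega
    exact_mod_cast hn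
  have : (0:ℝ) < p₁ / (4 * n) := by positivity
  linarith

lemma LRB (N n : ℕ) (β : ℝ) (hN : N = 2 * n) (m : ℕ) (hmn : m ≤ n)
    (hinc : ∀ k < m, barPiW N β k ≤ barPiW N β (k+1))
    (hdec : ∀ k, m ≤ k → k + 1 ≤ n → barPiW N β (k+1) ≤ barPiW N β k)
    (j : ℕ) (hj : j < n) :
    (∑ k ∈ Finset.range (n+1), if k ≤ j then barPiW N β k else 0)
      * (∑ l ∈ Finset.range (n+1), if j < l then barPiW N β l else 0)
    ≤ ((n:ℝ)+1) * barPiW N β j * (∑ k ∈ Finset.range (n+1), barPiW N β k) := by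
  have hπpos : ∀ k ≤ n, 0 < barPiW N β k := fun k hk => pi_pos N n β hN k hk
  have mono_inc : ∀ a b, a ≤ b → b ≤ m → barPiW N β a ≤ barPiW N β b := by
    intro a b hab hbm
    induction b, hab using Nat.le_induction with
    | base => exact le_refl _
    | succ c hc ih => exact le_trans (ih (by omega)) (hinc c (by omega))
  have mono_dec : ∀ a b, m ≤ a → a ≤ b → b ≤ n → barPiW N β b ≤ barPiW N β a := by
    intro a b hma hab hbn
    induction b, hab using Nat.le_induction with
    | base => exact le_refl _
    | succ c hc ih => exact le_trans (hdec c (by omega) (by omega)) (ih (by omega))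
  have hLnn : (0:ℝ) ≤ ∑ k ∈ Finset.range (n+1), if k ≤ j then barPiW N β k else 0 := by
    apply Finset.sum_nonneg
    intro k hk
    split_ifs
    · exact le_of_lt (hπpos k (by have := Finset.mem_range.mp hk; omega))
    · exact le_refl _
  have hRnn : (0:ℝ) ≤ ∑ l ∈ Finset.range (n+1), if j < l then barPiW N β l else 0 := by
    apply Finset.sum_nonneg
    intro l hl
    split_ifs
    · exact le_of_lt (hπpos l (by have := Finset.mem_range.mp hl; omega))
    · exact le_refl _
  have hSnn : (0:ℝ) ≤ ∑ k ∈ Finset.range (n+1), barPiW N β k :=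
    Finset.sum_nonneg fun k hk => le_of_lt (hπpos k (by have := Finset.mem_range.mp hk; omega))
  have hLS : (∑ k ∈ Finset.range (n+1), if k ≤ j then barPiW N β k else 0)
      ≤ ∑ k ∈ Finset.range (n+1), barPiW N β k := by
    apply Finset.sum_le_sum
    intro k hk
    split_ifs
    · exact le_refl _
    · exact le_of_lt (hπpos k (by have := Finset.mem_range.mp hk; omega))
  have hRS : (∑ l ∈ Finset.range (n+1), if j < l then barPiW N β l else 0)
      ≤ ∑ k ∈ Finset.range (n+1), barPiW N β k := by
    apply Finset.sum_le_sum
    intro l hl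
    split_ifs
    · exact le_refl _
    · exact le_of_lt (hπpos l (by have := Finset.mem_range.mp hl; omega))
  have hπjnn : 0 ≤ barPiW N β j := le_of_lt (hπpos j (by omega))
  rcases le_or_gt j m with hjm | hmj
  · -- increasing side: L ≤ (n+1) π j
    have hL : (∑ k ∈ Finset.range (n+1), if k ≤ j then barPiW N β k else 0)
        ≤ ((n:ℝ)+1) * barPiW N β j := by
      calc (∑ k ∈ Finset.range (n+1), if k ≤ j then barPiW N β k else 0)
          ≤ ∑ k ∈ Finset.range (n+1), (if k ≤ j then barPiW N β j else 0) := by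
            apply Finset.sum_le_sum
            intro k _
            split_ifs with h
            · exact mono_inc k j h hjm
            · exact le_refl _
        _ = ((j:ℝ)+1) * barPiW N β j := by
            rw [← Finset.sum_filter]
            have hfil : (Finset.range (n+1)).filter (fun k => k ≤ j) = Finset.range (j+1) := by
              ext k
              simp only [Finset.mem_filter, Finset.mem_range]
              omega
            rw [hfil, Finset.sum_const, Finset.card_range, nsmul_eq_mul]
            push_cast
            ring
        _ ≤ ((n:ℝ)+1) * barPiW N β j := by
            apply mul_le_mul_of_nonneg_right _ hπjnn
            have : (j:ℝ) ≤ n := by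
              have : j ≤ n := by omega
              exact_mod_cast this
            linarith
    calc (∑ k ∈ Finset.range (n+1), if k ≤ j then barPiW N β k else 0)
        * (∑ l ∈ Finset.range (n+1), if j < l then barPiW N β l else 0)
        ≤ (((n:ℝ)+1) * barPiW N β j) * (∑ k ∈ Finset.range (n+1), barPiW N β k) :=
          mul_le_mul hL hRS hRnn (by positivity)
      _ = ((n:ℝ)+1) * barPiW N β j * (∑ k ∈ Finset.range (n+1), barPiW N β k) := by ring
  · -- decreasing side: R ≤ (n+1) π j
    have hπj1 : barPiW N β (j+1) ≤ barPiW N β j := hdec j (by omega) (by omega)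
    have hR : (∑ l ∈ Finset.range (n+1), if j < l then barPiW N β l else 0)
        ≤ ((n:ℝ)+1) * barPiW N β j := by
      calc (∑ l ∈ Finset.range (n+1), if j < l then barPiW N β l else 0)
          ≤ ∑ l ∈ Finset.range (n+1), (if j < l then barPiW N β (j+1) else 0) := by
            apply Finset.sum_le_sum
            intro l hl
            split_ifs with h
            · exact mono_dec (j+1) l (by omega) (by omega)
                (by have := Finset.mem_range.mp hl; omega)
            · exact le_refl _
        _ = (((n:ℕ) - j : ℕ):ℝ) * barPiW N β (j+1) := by
            rw [← Finset.sum_filter]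
            have hfil : (Finset.range (n+1)).filter (fun l => j < l) = Finset.Ico (j+1) (n+1) := by
              ext l
              simp only [Finset.mem_filter, Finset.mem_range, Finset.mem_Ico]
              omega
            rw [hfil, Finset.sum_const, Nat.card_Ico, nsmul_eq_mul]
            congr 1
            have : n + 1 - (j + 1) = n - j := by omega
            rw [this]
        _ ≤ ((n:ℝ)+1) * barPiW N β j := by
            have h1 : (((n:ℕ) - j : ℕ):ℝ) ≤ (n:ℝ) + 1 := by
              have : (n:ℕ) - j ≤ n + 1 := by omega
              exact_mod_cast this
            have h2 : 0 ≤ barPiW N β (j+1) := le_of_lt (hπpos (j+1) (by omega))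
            have h3 : (0:ℝ) ≤ (((n:ℕ) - j : ℕ):ℝ) := by positivity
            nlinarith
    calc (∑ k ∈ Finset.range (n+1), if k ≤ j then barPiW N β k else 0)
        * (∑ l ∈ Finset.range (n+1), if j < l then barPiW N β l else 0)
        ≤ (∑ k ∈ Finset.range (n+1), barPiW N β k) * (((n:ℝ)+1) * barPiW N β j) :=
          mul_le_mul hLS hR hRnn hSnn
      _ = ((n:ℝ)+1) * barPiW N β j * (∑ k ∈ Finset.range (n+1), barPiW N β k) := by ring

/-- for every `β > 0`, `p₁ ∈ (0,1)` and all sufficiently large even `N`,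
the projected birth-and-death chain `\bar P` satisfies
`λ₁(\bar P) ≤ 1 - (p₁/16)(N/2+1)^{-3}` (every eigenvalue with a nonconstant
eigenfunction obeys this bound) and `λ_min(\bar P) ≥ 1 - p₁` (every eigenvalue is at
least `1 - p₁`). -/
theorem ising_projected_eigenvalue_bounds (β p₁ : ℝ) (hβ : 0 < β)
    (hp₁ : p₁ ∈ Set.Ioo (0 : ℝ) 1) :
    ∃ N₀ : ℕ, ∀ N : ℕ, N₀ ≤ N → Even N →
      (∀ (ev : ℝ) (f : ℕ → ℝ),
        (∀ k ≤ N / 2, ∑ j ∈ Finset.range (N / 2 + 1), barQ N β p₁ k j * f j = ev * f k) →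
        (∃ k ≤ N / 2, ∃ k' ≤ N / 2, f k ≠ f k') →
        ev ≤ 1 - (p₁ / 16) * (1 / ((N : ℝ) / 2 + 1) ^ 3)) ∧
      (∀ (ev : ℝ) (f : ℕ → ℝ),
        (∀ k ≤ N / 2, ∑ j ∈ Finset.range (N / 2 + 1), barQ N β p₁ k j * f j = ev * f k) →
        (∃ k ≤ N / 2, f k ≠ 0) →
        1 - p₁ ≤ ev) := by
  obtain ⟨hp1, hp2⟩ := hp₁
  refine ⟨2 * (⌈(2*β)/(1-β)⌉₊ + 2), ?_⟩
  intro N hNlo hNeven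
  obtain ⟨r, hr⟩ := hNeven
  set n := r with hnr
  have hN : N = 2 * n := by omega
  have hn2 : 2 ≤ n := by omega
  have hnceil : ⌈(2*β)/(1-β)⌉₊ + 2 ≤ n := by omega
  have hN2 : N / 2 = n := by omega
  have hn0 : (0:ℝ) < n := by
    have h : 0 < n := by omega
    exact_mod_cast h
  have hNr2 : (N:ℝ) / 2 = (n:ℝ) := by
    rw [hN]; push_cast; ring
  have hgood : 2 * β ≤ (1 - β) * (n:ℝ) ∨ 1 ≤ β := by
    by_cases hb : 1 ≤ β
    · right; exact hb
    · left
      push_neg at hb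
      have h1b : (0:ℝ) < 1 - β := by linarith
      have hceil : (2*β)/(1-β) ≤ (⌈(2*β)/(1-β)⌉₊ : ℝ) := Nat.le_ceil _
      have hcn : ((⌈(2*β)/(1-β)⌉₊ : ℕ) : ℝ) ≤ (n:ℝ) := by
        exact_mod_cast le_trans (Nat.le_add_right _ 2) hnceil
      have : (2*β)/(1-β) ≤ (n:ℝ) := le_trans hceil hcn
      calc 2 * β = ((2*β)/(1-β)) * (1-β) := by field_simp
        _ ≤ (n:ℝ) * (1-β) := mul_le_mul_of_nonneg_right this (le_of_lt h1b)
        _ = (1 - β) * (n:ℝ) := by ring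
  rw [hN2]
  constructor
  · -- spectral gap bound
    intro ev f heig hnc
    have hEQ : ∀ k ≤ n, (1 - ev) * f k
        = upE N p₁ n k * (f k - f (k+1)) + dnE N β p₁ k * (f k - f (k-1)) := by
      intro k hk
      have h := heig k hk
      rw [row_sum N n β p₁ hN f k hk] at h
      linarith
    have hBE := hB_eq N n β p₁ hN ev f hEQ
    have hπpos : ∀ k ≤ n, 0 < barPiW N β k := fun k hk => pi_pos N n β hN k hk
    by_cases hev : ev = 1
    · exfalso
      subst hev
      have hz : ∀ j ∈ Finset.range n, (barPiW N β j * barUp N p₁ j) * (f (j+1) - f j)^2 = 0 := by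
        have hsum0 : ∑ j ∈ Finset.range n,
            (barPiW N β j * barUp N p₁ j) * (f (j+1) - f j)^2 = 0 := by
          rw [← hBE]; ring
        intro j hj
        have hnn : ∀ j ∈ Finset.range n,
            0 ≤ (barPiW N β j * barUp N p₁ j) * (f (j+1) - f j)^2 := by
          intro j hj
          have hjn : j < n := Finset.mem_range.mp hj
          have h1 := hπpos j (by omega)
          have h2 := barUp_pos N n p₁ hN (by omega) hp1 j hjn
          positivity
        exact (Finset.sum_eq_zero_iff_of_nonneg hnn).mp hsum0 j hj
      have hstep : ∀ j < n, f (j+1) = f j := by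
        intro j hj
        have h := hz j (Finset.mem_range.mpr hj)
        have h1 := hπpos j (by omega)
        have h2 := barUp_pos N n p₁ hN (by omega) hp1 j hj
        have h3 : (f (j+1) - f j)^2 = 0 := by
          by_contra hc
          have h4 : 0 < (f (j+1) - f j)^2 := lt_of_le_of_ne (sq_nonneg _) (Ne.symm hc)
          nlinarith [mul_pos (mul_pos h1 h2) h4, h]
        have := sq_eq_zero_iff.mp h3
        linarith
      have hconst : ∀ k ≤ n, f k = f 0 := by
        intro k hk
        induction k with
        | zero => rfl
        | succ k ih => rw [hstep k (by omega)]; exact ih (by omega)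
      obtain ⟨k, hk, k', hk', hne⟩ := hnc
      exact hne (by rw [hconst k hk, hconst k' hk'])
    · -- main case
      have hA0 : (∑ k ∈ Finset.range (n+1), barPiW N β k * f k) = 0 := by
        have h := hA_eq N n β p₁ hN ev f hEQ
        rcases mul_eq_zero.mp h with h1 | h1
        · exfalso; apply hev; linarith
        · exact h1
      have hBpos : 0 < ∑ k ∈ Finset.range (n+1), barPiW N β k * f k ^ 2 := by
        obtain ⟨k, hk, k', hk', hne⟩ := hnc
        have hknz : f k ≠ 0 ∨ f k' ≠ 0 := by
          by_contra hc
          push_neg at hc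
          exact hne (by rw [hc.1, hc.2])
        have hterm : ∀ i ∈ Finset.range (n+1), 0 ≤ barPiW N β i * f i ^ 2 := by
          intro i hi
          have := hπpos i (by have := Finset.mem_range.mp hi; omega)
          positivity
        rcases hknz with h | h
        · apply Finset.sum_pos' hterm
          refine ⟨k, Finset.mem_range.mpr (by omega), ?_⟩
          have h1 := hπpos k hk
          have h2 : 0 < f k ^ 2 := by positivity
          positivity
        · apply Finset.sum_pos' hterm
          refine ⟨k', Finset.mem_range.mpr (by omega), ?_⟩
          have h1 := hπpos k' hk'
          have h2 : 0 < f k' ^ 2 := by positivity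
          positivity
      have hSpos : 0 < ∑ k ∈ Finset.range (n+1), barPiW N β k :=
        Finset.sum_pos (fun k hk => hπpos k (by have := Finset.mem_range.mp hk; omega))
          ⟨0, Finset.mem_range.mpr (by omega)⟩
      obtain ⟨m, hm1, hmn, hinc, hdec⟩ := unimodal N n β hβ hN hn2 hgood
      set S := ∑ k ∈ Finset.range (n+1), barPiW N β k with hS
      set B := ∑ k ∈ Finset.range (n+1), barPiW N β k * f k ^ 2 with hB
      -- main chain
      have hmain : 2 * (S * B) ≤ (8 * (n:ℝ)^2 * ((n:ℝ)+1) / p₁) * (S * ((1 - ev) * B)) := by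
        calc 2 * (S * B)
            = ∑ k ∈ Finset.range (n+1), ∑ l ∈ Finset.range (n+1),
                barPiW N β k * barPiW N β l * (f k - f l)^2 := by
              rw [VExp N n β f, ← hS, ← hB, hA0]; ring
          _ ≤ ∑ k ∈ Finset.range (n+1), ∑ l ∈ Finset.range (n+1), (barPiW N β k * barPiW N β l *
                ((n:ℝ) * ∑ j ∈ Finset.range n,
                  ((if k ≤ j ∧ j < l then (1:ℝ) else 0) + (if l ≤ j ∧ j < k then 1 else 0))
                    * (f (j+1) - f j)^2)) := by
              apply Finset.sum_le_sum
              intro k hk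
              apply Finset.sum_le_sum
              intro l hl
              have hππ : 0 ≤ barPiW N β k * barPiW N β l := by
                have h1 := hπpos k (by have := Finset.mem_range.mp hk; omega)
                have h2 := hπpos l (by have := Finset.mem_range.mp hl; omega)
                positivity
              exact mul_le_mul_of_nonneg_left
                (PW n f k l (by have := Finset.mem_range.mp hk; omega)
                  (by have := Finset.mem_range.mp hl; omega)) hππ
          _ = (n:ℝ) * ∑ j ∈ Finset.range n,
                (2 * ((∑ k ∈ Finset.range (n+1), if k ≤ j then barPiW N β k else 0)
                    * (∑ l ∈ Finset.range (n+1), if j < l then barPiW N β l else 0)))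
                  * (f (j+1) - f j)^2 := EXC N n β f
          _ ≤ (n:ℝ) * ∑ j ∈ Finset.range n,
                (2 * (((n:ℝ)+1) * barPiW N β j * S)) * (f (j+1) - f j)^2 := by
              apply mul_le_mul_of_nonneg_left _ (le_of_lt hn0)
              apply Finset.sum_le_sum
              intro j hj
              apply mul_le_mul_of_nonneg_right _ (sq_nonneg _)
              have := LRB N n β hN m hmn hinc hdec j (Finset.mem_range.mp hj)
              rw [← hS] at this
              linarith
          _ ≤ (n:ℝ) * ∑ j ∈ Finset.range n,
                (2 * (((n:ℝ)+1) * ((4*(n:ℝ)/p₁) * (barPiW N β j * barUp N p₁ j)) * S))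
                  * (f (j+1) - f j)^2 := by
              apply mul_le_mul_of_nonneg_left _ (le_of_lt hn0)
              apply Finset.sum_le_sum
              intro j hj
              apply mul_le_mul_of_nonneg_right _ (sq_nonneg _)
              have hjn : j < n := Finset.mem_range.mp hj
              have hπj : barPiW N β j ≤ (4*(n:ℝ)/p₁) * (barPiW N β j * barUp N p₁ j) := by
                have hub := up_lb N n p₁ hN (by omega) hp1 j hjn
                have hπp := hπpos j (by omega)
                rw [← mul_assoc, mul_comm (4*(n:ℝ)/p₁) (barPiW N β j), mul_assoc]
                nth_rewrite 1 [← mul_one (barPiW N β j)]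
                apply mul_le_mul_of_nonneg_left _ (le_of_lt hπp)
                rw [div_mul_eq_mul_div, le_div_iff₀ hp1]
                calc (1:ℝ) * p₁ = p₁ := by ring
                  _ = (4*(n:ℝ)) * (p₁ / (4*(n:ℝ))) := by field_simp
                  _ ≤ (4*(n:ℝ)) * barUp N p₁ j :=
                      mul_le_mul_of_nonneg_left hub (by positivity)
              have hSnn : 0 ≤ S := le_of_lt hSpos
              have hn1 : (0:ℝ) ≤ (n:ℝ) + 1 := by positivity
              have hstep1 := mul_le_mul_of_nonneg_left hπj hn1
              have hstep2 := mul_le_mul_of_nonneg_right hstep1 hSnn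
              linarith [hstep2]
          _ = (8 * (n:ℝ)^2 * ((n:ℝ)+1) / p₁) * (S * (∑ j ∈ Finset.range n,
                (barPiW N β j * barUp N p₁ j) * (f (j+1) - f j)^2)) := by
              rw [Finset.mul_sum, Finset.mul_sum, Finset.mul_sum]
              apply Finset.sum_congr rfl
              intro j _
              field_simp
              ring
          _ = (8 * (n:ℝ)^2 * ((n:ℝ)+1) / p₁) * (S * ((1 - ev) * B)) := by rw [← hBE]
      -- conclude
      set K := 8 * (n:ℝ)^2 * ((n:ℝ)+1) / p₁ with hK
      have hKpos : 0 < K := by rw [hK]; positivity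
      have h2 : 2 * (S * B) ≤ (K * (1 - ev)) * (S * B) := by
        calc 2 * (S * B) ≤ K * (S * ((1 - ev) * B)) := hmain
          _ = (K * (1 - ev)) * (S * B) := by ring
      have h3 : (2:ℝ) ≤ K * (1 - ev) :=
        le_of_mul_le_mul_right h2 (mul_pos hSpos hBpos)
      have h4 : p₁ / (4*(n:ℝ)^2*((n:ℝ)+1)) ≤ 1 - ev := by
        rw [div_le_iff₀ (by positivity)]
        have h5 : K * (1 - ev) * p₁ = 8 * (n:ℝ)^2 * ((n:ℝ)+1) * (1 - ev) := by
          rw [hK]; field_simp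
        have h6 : 2 * p₁ ≤ K * (1 - ev) * p₁ :=
          mul_le_mul_of_nonneg_right h3 (le_of_lt hp1)
        rw [h5] at h6
        nlinarith
      rw [hNr2]
      have h7 : (p₁ / 16) * (1 / ((n:ℝ)+1)^3) ≤ p₁ / (4*(n:ℝ)^2*((n:ℝ)+1)) := by
        have he : (p₁ / 16) * (1 / ((n:ℝ)+1)^3) = p₁ / (16*((n:ℝ)+1)^3) := by
          field_simp
        rw [he, div_le_div_iff₀ (by positivity) (by positivity)]
        have key : 4*(n:ℝ)^2*((n:ℝ)+1) ≤ 16*((n:ℝ)+1)^3 := by nlinarith [hn0, sq_nonneg ((n:ℝ)+1)]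
        have := mul_le_mul_of_nonneg_left key (le_of_lt hp1)
        linarith [this]
      linarith
  · -- Gershgorin bound
    intro ev f heig hnz
    exact gershgorin N n β p₁ hN (by omega) hβ hp1 ev f heig hnz
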